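/- For every initial point (x₀, y₀) ∈ ℝ², there exists a differentiable curve γ : ℝ → ℝ × ℝ, defined on all of ℝ, such that γ(0) = (x₀, y₀) and for all t ∈ ℝ the derivative of the first component equals 1 and the derivative of the second component y(t) equals 2·y(t)²·(cos y(t))². In other words, the planar vector field (x,y) ↦ (1, 2y² cos²(y)) is complete: every integral curve extends to all of ℝ. -/

import Mathlib

open Real Set Filter intervalIntegral
open scoped Topology

noncomputable section CosFieldAux

/-- The vertical component of the vector field. -/
private def fV (y : ℝ) : ℝ := 2 * y ^ 2 * Real.cos y ^ 2

private lemma fV_nonneg (y : ℝ) : 0 ≤ fV y := by unfold fV; positivity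

private lemma fV_cont : Continuous fV := by unfold fV; fun_prop

private lemma fV_exists_zero_gt (y₀ : ℝ) : ∃ z, y₀ < z ∧ fV z = 0 := by
  obtain ⟨n, hn⟩ := exists_nat_gt y₀
  refine ⟨Real.pi / 2 + n * Real.pi, ?_, ?_⟩
  · have hpi := Real.pi_gt_three
    have : (n : ℝ) * 1 ≤ (n : ℝ) * Real.pi := by
      apply mul_le_mul_of_nonneg_left (by linarith) (Nat.cast_nonneg n)
    nlinarith [Real.pi_pos]
  · have : Real.cos (Real.pi / 2 + n * Real.pi) = 0 := by
      rw [Real.cos_add, Real.cos_pi_div_two, Real.sin_pi_div_two, Real.sin_nat_mul_pi]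
      ring
    unfold fV; rw [this]; ring

private lemma fV_exists_zero_lt (y₀ : ℝ) : ∃ z, z < y₀ ∧ fV z = 0 := by
  obtain ⟨n, hn⟩ := exists_nat_gt (Real.pi / 2 - y₀)
  refine ⟨Real.pi / 2 - n * Real.pi, ?_, ?_⟩
  · have hpi := Real.pi_gt_three
    have : (n : ℝ) * 1 ≤ (n : ℝ) * Real.pi := by
      apply mul_le_mul_of_nonneg_left (by linarith) (Nat.cast_nonneg n)
    nlinarith
  · have : Real.cos (Real.pi / 2 - n * Real.pi) = 0 := by
      rw [Real.cos_pi_div_two_sub, Real.sin_nat_mul_pi]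
    unfold fV; rw [this]; ring

/-- bound near a double zero `z` of `fV`. -/
private lemma fV_bound {a b : ℝ} (z : ℝ) (hz : fV z = 0) (hza : z = a ∨ z = b)
    {u : ℝ} (hu : u ∈ Set.Ioo a b) :
    fV u ≤ (2 * (1 + (|a| + |b|) ^ 2)) * (u - z) ^ 2 := by
  obtain ⟨hu1, hu2⟩ := hu
  have habs : u ^ 2 ≤ (|a| + |b|) ^ 2 := by
    nlinarith [le_abs_self a, le_abs_self b, neg_abs_le a, neg_abs_le b, abs_nonneg a, abs_nonneg b]
  have hcos1 : Real.cos u ^ 2 ≤ 1 := by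
    nlinarith [Real.neg_one_le_cos u, Real.cos_le_one u]
  have hz0 : z = 0 ∨ Real.cos z = 0 := by
    unfold fV at hz
    rcases mul_eq_zero.1 hz with h | h
    · rcases mul_eq_zero.1 h with h | h
      · norm_num at h
      · left; nlinarith [sq_nonneg z]
    · right; nlinarith [sq_nonneg (Real.cos z)]
  rcases hz0 with rfl | hcz
  · unfold fV
    nlinarith [mul_le_mul_of_nonneg_left hcos1 (sq_nonneg u), sq_nonneg (|a| + |b|),
      sq_nonneg u, sq_nonneg (Real.cos u)]
  · have hlip : |Real.cos u| ≤ |u - z| := by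
      have h0 : Real.cos u = Real.cos u - Real.cos z := by rw [hcz, sub_zero]
      rw [h0, Real.cos_sub_cos]
      have h1 := Real.abs_sin_le_abs (x := (u - z) / 2)
      have h2 : |Real.sin ((u + z) / 2)| ≤ 1 :=
        abs_le.2 ⟨Real.neg_one_le_sin _, Real.sin_le_one _⟩
      calc |(-2) * Real.sin ((u + z) / 2) * Real.sin ((u - z) / 2)|
          = 2 * |Real.sin ((u + z) / 2)| * |Real.sin ((u - z) / 2)| := by
            rw [abs_mul, abs_mul]; norm_num
        _ ≤ 2 * 1 * |(u - z) / 2| := by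
            apply mul_le_mul ?_ h1 (abs_nonneg _) (by positivity)
            exact mul_le_mul_of_nonneg_left h2 (by norm_num)
        _ = |u - z| := by rw [abs_div, abs_two]; ring
    have h1 : Real.cos u ^ 2 ≤ (u - z) ^ 2 := by
      nlinarith [abs_nonneg (Real.cos u), abs_nonneg (u - z), sq_abs (Real.cos u), sq_abs (u - z)]
    unfold fV
    nlinarith [mul_le_mul_of_nonneg_left h1 (sq_nonneg u),
      mul_le_mul_of_nonneg_right habs (sq_nonneg (u - z)), sq_nonneg (u - z)]

set_option maxHeartbeats 1000000 in
private lemma key_ode (y₀ : ℝ) (h : fV y₀ ≠ 0) :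
    ∃ Y : ℝ → ℝ, Y 0 = y₀ ∧ ∀ t, HasDerivAt Y (fV (Y t)) t := by
  have hcl : IsClosed {y : ℝ | fV y = 0} := isClosed_eq fV_cont continuous_const
  obtain ⟨z₂, hz₂, hz₂0⟩ := fV_exists_zero_gt y₀
  obtain ⟨z₁, hz₁, hz₁0⟩ := fV_exists_zero_lt y₀
  set b := sInf ({y : ℝ | fV y = 0} ∩ Set.Ici y₀) with hbdef
  set a := sSup ({y : ℝ | fV y = 0} ∩ Set.Iic y₀) with hadef
  have hbddb : BddBelow ({y : ℝ | fV y = 0} ∩ Set.Ici y₀) := ⟨y₀, fun x hx => hx.2⟩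
  have hbdda : BddAbove ({y : ℝ | fV y = 0} ∩ Set.Iic y₀) := ⟨y₀, fun x hx => hx.2⟩
  have hbmem : b ∈ {y : ℝ | fV y = 0} ∩ Set.Ici y₀ :=
    (hcl.inter isClosed_Ici).csInf_mem ⟨z₂, hz₂0, le_of_lt hz₂⟩ hbddb
  have hamem : a ∈ {y : ℝ | fV y = 0} ∩ Set.Iic y₀ :=
    (hcl.inter isClosed_Iic).csSup_mem ⟨z₁, hz₁0, le_of_lt hz₁⟩ hbdda
  have hby : y₀ < b := lt_of_le_of_ne hbmem.2 fun e => h (by rw [e]; exact hbmem.1)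
  have hay : a < y₀ := lt_of_le_of_ne hamem.2 fun e => h (by rw [← e]; exact hamem.1)
  have hpos : ∀ u ∈ Set.Ioo a b, 0 < fV u := by
    intro u hu
    rcases (fV_nonneg u).lt_or_eq with hp | hp
    · exact hp
    · exfalso
      rcases le_or_gt y₀ u with hc | hc
      · exact absurd (csInf_le hbddb ⟨hp.symm, hc⟩) (not_le.2 hu.2)
      · exact absurd (le_csSup hbdda ⟨hp.symm, hc.le⟩) (not_le.2 hu.1)
  set C : ℝ := 2 * (1 + (|a| + |b|) ^ 2) with hCdef
  have hCpos : 0 < C := by positivity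
  set g : ℝ → ℝ := fun u => (fV u)⁻¹ with hgdef
  have hgcont : ContinuousOn g (Set.Ioo a b) :=
    fV_cont.continuousOn.inv₀ fun u hu => (hpos u hu).ne'
  have hy₀mem : y₀ ∈ Set.Ioo a b := ⟨hay, hby⟩
  have hint : ∀ {y}, y ∈ Set.Ioo a b → IntervalIntegrable g MeasureTheory.volume y₀ y :=
    fun {y} hy =>
      (hgcont.mono (Set.OrdConnected.uIcc_subset Set.ordConnected_Ioo hy₀mem hy)).intervalIntegrable
  set F : ℝ → ℝ := fun y => ∫ u in y₀..y, g u with hFdef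
  have hFd : ∀ y ∈ Set.Ioo a b, HasDerivAt F (g y) y := by
    intro y hy
    have hca : ContinuousAt g y := hgcont.continuousAt (isOpen_Ioo.mem_nhds hy)
    exact intervalIntegral.integral_hasDerivAt_right (hint hy)
      (hgcont.stronglyMeasurableAtFilter isOpen_Ioo y hy) hca
  have hFc : ContinuousOn F (Set.Ioo a b) := fun y hy =>
    (hFd y hy).continuousAt.continuousWithinAt
  have hFmono : StrictMonoOn F (Set.Ioo a b) := by
    apply strictMonoOn_of_deriv_pos (convex_Ioo a b) hFc
    intro y hy
    rw [interior_Ioo] at hy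
    rw [(hFd y hy).deriv]
    exact inv_pos.2 (hpos y hy)
  -- lower bound near b
  have hbound_b : ∀ y ∈ Set.Ioo y₀ b,
      C⁻¹ * (b - y)⁻¹ - C⁻¹ * (b - y₀)⁻¹ ≤ F y := by
    intro y hy
    have hyab : y ∈ Set.Ioo a b := ⟨lt_trans hay hy.1, hy.2⟩
    have hIcc : Set.Icc y₀ y ⊆ Set.Ioo a b := fun u hu =>
      ⟨lt_of_lt_of_le hay hu.1, lt_of_le_of_lt hu.2 hy.2⟩
    set H : ℝ → ℝ := fun u => (C * (b - u))⁻¹ with hHdef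
    set h2 : ℝ → ℝ := fun u => (C * (b - u) ^ 2)⁻¹ with hh2def
    have hHd : ∀ u ∈ Set.uIcc y₀ y, HasDerivAt H (h2 u) u := by
      intro u hu
      rw [Set.uIcc_of_le hy.1.le] at hu
      have hub : 0 < b - u := sub_pos.2 (hIcc hu).2
      have hd : HasDerivAt (fun v => C * (b - v)) (-C) u := by
        simpa using ((hasDerivAt_id u).const_sub b).const_mul C
      have hd2 := hd.inv (by positivity)
      refine hd2.congr_deriv ?_
      rw [hh2def]
      field_simp
    have hh2i : IntervalIntegrable h2 MeasureTheory.volume y₀ y := by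
      apply ContinuousOn.intervalIntegrable
      apply ContinuousOn.inv₀
      · fun_prop
      · intro u hu
        rw [Set.uIcc_of_le hy.1.le] at hu
        have : 0 < b - u := sub_pos.2 (hIcc hu).2
        positivity
    have hcomp : ∫ u in y₀..y, h2 u ≤ F y := by
      apply intervalIntegral.integral_mono_on hy.1.le hh2i (hint hyab)
      intro u hu
      have huab := hIcc hu
      have hf1 : 0 < fV u := hpos u huab
      have hf2 : fV u ≤ C * (b - u) ^ 2 := by
        calc fV u ≤ 2 * (1 + (|a| + |b|) ^ 2) * (u - b) ^ 2 :=
              fV_bound b hbmem.1 (Or.inr rfl) huab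
          _ = C * (b - u) ^ 2 := by rw [hCdef]; ring
      exact inv_anti₀ hf1 hf2
    have hcalc : ∫ u in y₀..y, h2 u = H y - H y₀ :=
      intervalIntegral.integral_eq_sub_of_hasDerivAt hHd hh2i
    have hHy : H y = C⁻¹ * (b - y)⁻¹ := by simp only [hHdef, mul_inv]
    have hHy₀ : H y₀ = C⁻¹ * (b - y₀)⁻¹ := by simp only [hHdef, mul_inv]
    rw [hcalc, hHy, hHy₀] at hcomp
    linarith
  -- upper bound near a
  have hbound_a : ∀ y ∈ Set.Ioo a y₀,
      F y ≤ C⁻¹ * (y₀ - a)⁻¹ - C⁻¹ * (y - a)⁻¹ := by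
    intro y hy
    have hyab : y ∈ Set.Ioo a b := ⟨hy.1, lt_trans hy.2 hby⟩
    have hIcc : Set.Icc y y₀ ⊆ Set.Ioo a b := fun u hu =>
      ⟨lt_of_lt_of_le hy.1 hu.1, lt_of_le_of_lt hu.2 hby⟩
    set H : ℝ → ℝ := fun u => -(C * (u - a))⁻¹ with hHdef
    set h2 : ℝ → ℝ := fun u => (C * (u - a) ^ 2)⁻¹ with hh2def
    have hHd : ∀ u ∈ Set.uIcc y y₀, HasDerivAt H (h2 u) u := by
      intro u hu
      rw [Set.uIcc_of_le hy.2.le] at hu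
      have hub : 0 < u - a := sub_pos.2 (hIcc hu).1
      have hd : HasDerivAt (fun v => C * (v - a)) C u := by
        simpa using ((hasDerivAt_id u).sub_const a).const_mul C
      have hd2 := (hd.inv (by positivity)).neg
      refine hd2.congr_deriv ?_
      rw [hh2def]
      field_simp
    have hh2i : IntervalIntegrable h2 MeasureTheory.volume y y₀ := by
      apply ContinuousOn.intervalIntegrable
      apply ContinuousOn.inv₀
      · fun_prop
      · intro u hu
        rw [Set.uIcc_of_le hy.2.le] at hu
        have : 0 < u - a := sub_pos.2 (hIcc hu).1
        positivity
    have hgi : IntervalIntegrable g MeasureTheory.volume y y₀ := (hint hyab).symm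
    have hcomp : ∫ u in y..y₀, h2 u ≤ ∫ u in y..y₀, g u := by
      apply intervalIntegral.integral_mono_on hy.2.le hh2i hgi
      intro u hu
      have huab := hIcc hu
      have hf1 : 0 < fV u := hpos u huab
      have hf2 : fV u ≤ C * (u - a) ^ 2 := by
        calc fV u ≤ 2 * (1 + (|a| + |b|) ^ 2) * (u - a) ^ 2 :=
              fV_bound a hamem.1 (Or.inl rfl) huab
          _ = C * (u - a) ^ 2 := by rw [hCdef]
      exact inv_anti₀ hf1 hf2
    have hcalc : ∫ u in y..y₀, h2 u = H y₀ - H y :=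
      intervalIntegral.integral_eq_sub_of_hasDerivAt hHd hh2i
    have hsymm : F y = -∫ u in y..y₀, g u := by
      show (∫ u in y₀..y, g u) = -∫ u in y..y₀, g u
      rw [intervalIntegral.integral_symm y₀ y, neg_neg]
    have hHy : H y = -(C⁻¹ * (y - a)⁻¹) := by simp only [hHdef, mul_inv]
    have hHy₀ : H y₀ = -(C⁻¹ * (y₀ - a)⁻¹) := by simp only [hHdef, mul_inv]
    rw [hcalc, hHy, hHy₀] at hcomp
    rw [hsymm]
    linarith
  -- tendsto atTop at b
  have htb : Tendsto F (𝓝[<] b) atTop := by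
    have hL : Tendsto (fun y => C⁻¹ * (b - y)⁻¹ - C⁻¹ * (b - y₀)⁻¹) (𝓝[<] b) atTop := by
      have h1 : Tendsto (fun y => b - y) (𝓝[<] b) (𝓝[>] (0 : ℝ)) := by
        apply tendsto_nhdsWithin_of_tendsto_nhds_of_eventually_within
        · have h0 : Tendsto (fun y : ℝ => b - y) (𝓝 b) (𝓝 (b - b)) :=
            (continuous_const.sub continuous_id).tendsto b
          rw [sub_self] at h0
          exact h0.mono_left nhdsWithin_le_nhds
        · filter_upwards [self_mem_nhdsWithin] with y hy
          exact sub_pos.2 (Set.mem_Iio.1 hy)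
      have h2 : Tendsto (fun y => (b - y)⁻¹) (𝓝[<] b) atTop :=
        tendsto_inv_nhdsGT_zero.comp h1
      have h3 := Tendsto.const_mul_atTop (inv_pos.2 hCpos) h2
      have h4 := tendsto_atTop_add_const_right (𝓝[<] b) (-(C⁻¹ * (b - y₀)⁻¹)) h3
      simpa [sub_eq_add_neg] using h4
    refine tendsto_atTop_mono' _ ?_ hL
    filter_upwards [Ioo_mem_nhdsLT hby] with y hy
    exact hbound_b y hy
  -- tendsto atBot at a
  have hta : Tendsto F (𝓝[>] a) atBot := by
    have hU : Tendsto (fun y => C⁻¹ * (y₀ - a)⁻¹ - C⁻¹ * (y - a)⁻¹) (𝓝[>] a) atBot := by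
      have h1 : Tendsto (fun y => y - a) (𝓝[>] a) (𝓝[>] (0 : ℝ)) := by
        apply tendsto_nhdsWithin_of_tendsto_nhds_of_eventually_within
        · have h0 : Tendsto (fun y : ℝ => y - a) (𝓝 a) (𝓝 (a - a)) :=
            (continuous_id.sub continuous_const).tendsto a
          rw [sub_self] at h0
          exact h0.mono_left nhdsWithin_le_nhds
        · filter_upwards [self_mem_nhdsWithin] with y hy
          exact sub_pos.2 (Set.mem_Ioi.1 hy)
      have h2 : Tendsto (fun y => (y - a)⁻¹) (𝓝[>] a) atTop :=
        tendsto_inv_nhdsGT_zero.comp h1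
      have h3 := Tendsto.const_mul_atTop (inv_pos.2 hCpos) h2
      have h5 : Tendsto (fun y => -(C⁻¹ * (y - a)⁻¹)) (𝓝[>] a) atBot :=
        tendsto_neg_atTop_atBot.comp h3
      have h6 := tendsto_atBot_add_const_left (𝓝[>] a) (C⁻¹ * (y₀ - a)⁻¹) h5
      simpa [sub_eq_add_neg] using h6
    refine tendsto_atBot_mono' _ ?_ hU
    filter_upwards [Ioo_mem_nhdsGT hay] with y hy
    exact hbound_a y hy
  -- surjectivity onto ℝ
  have hsurj : ∀ t : ℝ, ∃ y, y ∈ Set.Ioo a b ∧ F y = t := by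
    intro t
    have hbev : ∀ᶠ y in 𝓝[<] b, t ≤ F y ∧ y ∈ Set.Ioo y₀ b :=
      (htb.eventually_ge_atTop t).and
        (eventually_of_mem (Ioo_mem_nhdsLT hby) fun y hy => hy)
    have haev : ∀ᶠ y in 𝓝[>] a, F y ≤ t ∧ y ∈ Set.Ioo a y₀ :=
      (hta.eventually_le_atBot t).and
        (eventually_of_mem (Ioo_mem_nhdsGT hay) fun y hy => hy)
    obtain ⟨y₂, hy₂t, hy₂⟩ := hbev.exists
    obtain ⟨y₁, hy₁t, hy₁⟩ := haev.exists
    have h12 : y₁ ≤ y₂ := le_of_lt (lt_trans hy₁.2 hy₂.1)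
    have hIcc : Set.Icc y₁ y₂ ⊆ Set.Ioo a b := fun u hu =>
      ⟨lt_of_lt_of_le hy₁.1 hu.1, lt_of_le_of_lt hu.2 hy₂.2⟩
    obtain ⟨y, hyI, hyF⟩ := intermediate_value_Icc h12 (hFc.mono hIcc) ⟨hy₁t, hy₂t⟩
    exact ⟨y, hIcc hyI, hyF⟩
  choose Y hYmem hYF using hsurj
  have hInj := hFmono.injOn
  have hFy₀ : F y₀ = 0 := intervalIntegral.integral_same
  have hY0 : Y 0 = y₀ := hInj (hYmem 0) hy₀mem (by rw [hYF 0, hFy₀])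
  have hYstrict : StrictMono Y := by
    intro s t hst
    rcases lt_trichotomy (Y s) (Y t) with h' | h' | h'
    · exact h'
    · exfalso
      have : s = t := by rw [← hYF s, h', hYF t]
      exact hst.ne this
    · exfalso
      have h2 := hFmono (hYmem t) (hYmem s) h'
      rw [hYF s, hYF t] at h2
      exact absurd h2 (not_lt.2 hst.le)
  have hYcont : ∀ t, ContinuousAt Y t := by
    intro t
    apply continuousAt_of_monotoneOn_of_image_mem_nhds (f := Y) (s := Set.univ)
      (fun u _ v _ huv => hYstrict.monotone huv) Filter.univ_mem
    rw [Set.image_univ]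
    apply Filter.mem_of_superset (isOpen_Ioo.mem_nhds (hYmem t))
    intro y hy
    exact ⟨F y, hInj (hYmem (F y)) hy (hYF (F y))⟩
  refine ⟨Y, hY0, fun t => ?_⟩
  have hgY : HasDerivAt F (g (Y t)) (Y t) := hFd (Y t) (hYmem t)
  have hne : g (Y t) ≠ 0 := inv_ne_zero (hpos _ (hYmem t)).ne'
  have hder := HasDerivAt.of_local_left_inverse (hYcont t) hgY hne
    (Filter.Eventually.of_forall fun s => hYF s)
  have hres : (g (Y t))⁻¹ = fV (Y t) := by simp only [hgdef, inv_inv]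
  rwa [hres] at hder

end CosFieldAux

/-- The planar vector field `(x, y) ↦ (1, 2y² cos²(y))` is complete: for every initial
point `(x₀, y₀)` there is a globally defined integral curve through it. -/
theorem complete_connection_cosField :
    ∀ x₀ y₀ : ℝ, ∃ γ : ℝ → ℝ × ℝ,
      γ 0 = (x₀, y₀) ∧
      ∀ t : ℝ,
        HasDerivAt (fun s => (γ s).1) 1 t ∧
        HasDerivAt (fun s => (γ s).2)
          (2 * (γ t).2 ^ 2 * Real.cos ((γ t).2) ^ 2) t := by
  intro x₀ y₀
  by_cases h : fV y₀ = 0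
  · refine ⟨fun t => (x₀ + t, y₀), by simp, fun t => ⟨?_, ?_⟩⟩
    · simpa using (hasDerivAt_id t).const_add x₀
    · simp only []
      have : (2 : ℝ) * y₀ ^ 2 * Real.cos y₀ ^ 2 = 0 := h
      rw [this]
      exact hasDerivAt_const t y₀
  · obtain ⟨Y, hY0, hYd⟩ := key_ode y₀ h
    refine ⟨fun t => (x₀ + t, Y t), by simp [hY0], fun t => ⟨?_, ?_⟩⟩
    · simpa using (hasDerivAt_id t).const_add x₀
    · exact hYd t
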